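/- If e is a cut edge of a connected unweighted graph whose removal separates the vertex set into components S and T, then B_e^2 = |S||T|/n, the inverse isoperimetric ratio of S. -/

import Mathlib

open Matrix BigOperators

/-- For a cut edge e of a connected unweighted graph whose removal
separates the vertices into S and its complement, B_e² = |S|·|V∖S|/n. -/
theorem biharmonic_of_cut_edge
    {V E : Type*} [Fintype V] [DecidableEq V] [Fintype E] [DecidableEq E]
    (vsrc vtgt : E → V) (hsimple : ∀ e, vsrc e ≠ vtgt e)
    (Bd : Matrix V E ℝ)
    (hBd : Bd = fun v e => (if v = vsrc e then (1:ℝ) else 0) - (if v = vtgt e then 1 else 0))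
    (L : Matrix V V ℝ) (hLdef : L = Bd * Bdᵀ)
    (hconn : ∀ x : V → ℝ, L *ᵥ x = 0 → ∃ c : ℝ, x = Function.const V c)
    (Lp : Matrix V V ℝ)
    (hp1 : L * Lp * L = L) (hp2 : Lp * L * Lp = Lp)
    (hp3 : (L * Lp)ᵀ = L * Lp) (hp4 : (Lp * L)ᵀ = Lp * L)
    (e0 : E) (S : Finset V)
    (hsS : vsrc e0 ∈ S) (htS : vtgt e0 ∉ S)
    (hcut : ∀ e : E, e ≠ e0 → (vsrc e ∈ S ↔ vtgt e ∈ S))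
 :
    (Pi.single (vsrc e0) 1 - Pi.single (vtgt e0) 1) ⬝ᵥ ((Lp * Lp) *ᵥ (Pi.single (vsrc e0) 1 - Pi.single (vtgt e0) 1))
      = ((S.card : ℝ) * (Sᶜ.card : ℝ)) / (Fintype.card V : ℝ) := by
  classical
  have hV : Nonempty V := ⟨vsrc e0⟩
  set n : ℝ := (Fintype.card V : ℝ) with hn
  have hnpos : (0:ℝ) < n := by
    have h := Fintype.card_pos (α := V)
    rw [hn]
    exact_mod_cast h
  have hn0 : n ≠ 0 := ne_of_gt hnpos
  set a : ℝ := (S.card : ℝ) with ha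
  set b : ℝ := (Sᶜ.card : ℝ) with hb
  have hab : a + b = n := by
    rw [ha, hb, hn]
    exact_mod_cast Finset.card_add_card_compl S
  -- symmetry of L
  have hLsym : Lᵀ = L := by
    rw [hLdef]; simp [Matrix.transpose_mul]
  -- symmetry of Lp
  have b1 : L * Lpᵀ * L = L := by
    have h := congrArg Matrix.transpose hp1
    simpa [Matrix.transpose_mul, hLsym, Matrix.mul_assoc] using h
  have b2 : Lpᵀ * L * Lpᵀ = Lpᵀ := by
    have h := congrArg Matrix.transpose hp2
    simpa [Matrix.transpose_mul, hLsym, Matrix.mul_assoc] using h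
  have hA : L * Lpᵀ = Lp * L := by
    calc L * Lpᵀ = (Lp * Lᵀ)ᵀ := by simp [Matrix.transpose_mul, hLsym]
    _ = (Lp * L)ᵀ := by rw [hLsym]
    _ = Lp * L := hp4
  have hB : Lpᵀ * L = L * Lp := by
    calc Lpᵀ * L = (Lᵀ * Lp)ᵀ := by simp [Matrix.transpose_mul, hLsym]
    _ = (L * Lp)ᵀ := by rw [hLsym]
    _ = L * Lp := hp3
  have hcomm : Lp * L = L * Lp := by
    calc Lp * L = Lp * (L * Lpᵀ * L) := by rw [b1]
    _ = (Lp * L) * (Lpᵀ * L) := by simp only [Matrix.mul_assoc]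
    _ = (Lp * L) * (L * Lp) := by rw [hB]
    _ = (L * Lpᵀ) * (L * Lp) := by rw [hA]
    _ = (L * Lpᵀ * L) * Lp := by simp only [Matrix.mul_assoc]
    _ = L * Lp := by rw [b1]
  have hLpsym : Lpᵀ = Lp := by
    calc Lpᵀ = Lpᵀ * L * Lpᵀ := b2.symm
    _ = (L * Lp) * Lpᵀ := by rw [hB]
    _ = (Lp * L) * Lpᵀ := by rw [hcomm]
    _ = Lp * (L * Lpᵀ) := by rw [Matrix.mul_assoc]
    _ = Lp * (Lp * L) := by rw [hA]
    _ = Lp * (L * Lp) := by rw [hcomm]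
    _ = Lp * L * Lp := by rw [Matrix.mul_assoc]
    _ = Lp := hp2
  -- the vector x
  set x : V → ℝ := fun v => if v ∈ S then b / n else -(a / n) with hx
  set δ : V → ℝ := Pi.single (vsrc e0) 1 - Pi.single (vtgt e0) 1 with hδ
  -- Bdᵀ *ᵥ x = indicator of e0
  have hBdx : Bdᵀ *ᵥ x = Pi.single e0 1 := by
    funext e
    have : (Bdᵀ *ᵥ x) e = x (vsrc e) - x (vtgt e) := by
      simp only [Matrix.mulVec, dotProduct, Matrix.transpose_apply]
      simp only [hBd]
      simp only [sub_mul, ite_mul, one_mul, zero_mul, Finset.sum_sub_distrib,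
        Finset.sum_ite_eq', Finset.mem_univ, if_true]
    rw [this]
    by_cases he : e = e0
    · subst he
      simp only [hx, if_pos hsS, if_neg htS, Pi.single_eq_same]
      field_simp
      linarith [hab]
    · have hiff := hcut e he
      rw [Pi.single_eq_of_ne he]
      by_cases hs' : vsrc e ∈ S
      · simp [hx, hs', hiff.mp hs']
      · have ht' : vtgt e ∉ S := fun h => hs' (hiff.mpr h)
        simp [hx, hs', ht']
  have hLx : L *ᵥ x = δ := by
    rw [hLdef, ← Matrix.mulVec_mulVec, hBdx]
    funext v
    rw [Matrix.mulVec_single]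
    simp only [Pi.smul_apply, Matrix.col_apply]
    simp [hBd, hδ, Pi.single_apply, Matrix.sub_apply]
  -- L *ᵥ 1 = 0
  have hL1 : L *ᵥ (fun _ => (1:ℝ)) = 0 := by
    rw [hLdef, ← Matrix.mulVec_mulVec]
    have : Bdᵀ *ᵥ (fun _ => (1:ℝ)) = 0 := by
      funext e
      simp only [Matrix.mulVec, dotProduct, Matrix.transpose_apply]
      simp [Matrix.mulVec, dotProduct, hBd, sub_mul, Finset.sum_sub_distrib,
        Finset.sum_ite_eq', Matrix.transpose_apply]
    rw [this]
    simp
  -- sum of x is 0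
  have hsumx : ∑ v, x v = 0 := by
    rw [hx]
    rw [Finset.sum_ite]
    have h1 : Finset.filter (fun v => v ∈ S) Finset.univ = S := by
      ext v; simp
    have h2 : Finset.filter (fun v => ¬ v ∈ S) Finset.univ = Sᶜ := by
      ext v; simp
    rw [h1, h2, Finset.sum_const, Finset.sum_const, nsmul_eq_mul, nsmul_eq_mul, ← ha, ← hb]
    field_simp
    ring
  -- (Lp * L) *ᵥ x = x
  have hPx : (Lp * L) *ᵥ x = x := by
    set y : V → ℝ := (Lp * L) *ᵥ x - x with hy
    have hLy : L *ᵥ y = 0 := by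
      rw [hy, Matrix.mulVec_sub, Matrix.mulVec_mulVec, ← Matrix.mul_assoc, hp1]
      simp
    obtain ⟨c, hc⟩ := hconn y hLy
    have hsumy : ∑ v, y v = 0 := by
      have h1 : ∑ v, ((Lp * L) *ᵥ x) v = 0 := by
        have : ∑ v, ((Lp * L) *ᵥ x) v = (fun _ => (1:ℝ)) ⬝ᵥ ((Lp * L) *ᵥ x) := by
          simp [dotProduct]
        rw [this, Matrix.dotProduct_mulVec]
        have hv : (fun _ => (1:ℝ)) ᵥ* (Lp * L) = 0 := by
          rw [← Matrix.mulVec_transpose, hp4, ← Matrix.mulVec_mulVec, hL1]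
          simp
        rw [hv]
        simp [dotProduct]
      simp [hy, Finset.sum_sub_distrib, h1, hsumx]
    have hcc : c * n = 0 := by
      rw [hc] at hsumy
      simpa [Function.const, mul_comm, hn] using hsumy
    have hc0 : c = 0 := by
      rcases mul_eq_zero.mp hcc with h | h
      · exact h
      · exact absurd h hn0
    have : y = 0 := by rw [hc, hc0]; funext v; simp [Function.const]
    have := sub_eq_zero.mp (by rw [← hy]; exact this)
    exact this
  have hLpδ : Lp *ᵥ δ = x := by
    rw [← hLx, Matrix.mulVec_mulVec, hPx]
  -- final computation
  have key : δ ⬝ᵥ ((Lp * Lp) *ᵥ δ) = x ⬝ᵥ x := by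
    rw [← Matrix.mulVec_mulVec, hLpδ, Matrix.dotProduct_mulVec, ← Matrix.mulVec_transpose,
      hLpsym, hLpδ]
  rw [key]
  -- x ⬝ᵥ x = a * b / n
  have : x ⬝ᵥ x = a * (b/n)^2 + b * (a/n)^2 := by
    simp only [dotProduct, hx]
    have : ∀ v : V, (if v ∈ S then b / n else -(a / n)) * (if v ∈ S then b / n else -(a / n))
        = if v ∈ S then (b/n)^2 else (a/n)^2 := by
      intro v; by_cases h : v ∈ S <;> simp [h] <;> ring
    simp only [this]
    rw [Finset.sum_ite]
    have h1 : Finset.filter (fun v => v ∈ S) Finset.univ = S := by ext v; simp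
    have h2 : Finset.filter (fun v => ¬ v ∈ S) Finset.univ = Sᶜ := by ext v; simp
    rw [h1, h2, Finset.sum_const, Finset.sum_const, nsmul_eq_mul, nsmul_eq_mul, ← ha, ← hb]
  rw [this]
  have h2 : a * (b/n)^2 + b * (a/n)^2 = (a*b*(a+b))/n^2 := by ring
  rw [h2, hab]
  field_simp
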